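/- arXiv:1304.5798 — 7 statements merged into one kernel-verified Lean document; each statement's English description precedes it below -/
import Mathlib

section
/- For every n ≥ 1 and all u, v ∈ S_n, we have D(id, v) + D(v, u) = D(id, u) if and only if min(i, u(i)) ≤ v(i) ≤ max(i, u(i)) for all i = 1, 2, …, n. In other words, v lies in the segment [id, u] exactly when every value v(i) lies between i and u(i). -/
/-- Membership in `S_n`, realized as permutations of `ℕ` fixing every point
outside `{1, …, n}`. -/
def InSymm (n : ℕ) (π : Equiv.Perm ℕ) : Prop :=
  ∀ i : ℕ, i ∉ Finset.Icc 1 n → π i = i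

/-- The ℓ¹-distance `D(u,v) = ∑_{i=1}^n |u(i) − v(i)|` on `S_n`. -/
def permDist (n : ℕ) (u v : Equiv.Perm ℕ) : ℤ :=
  ∑ i ∈ Finset.Icc 1 n, |(u i : ℤ) - (v i : ℤ)|

lemma key_abs (a b c : ℤ) : |a - b| + |b - c| = |a - c| ↔ min a c ≤ b ∧ b ≤ max a c := by
  rcases abs_cases (a - b) with ⟨h1, h1'⟩ | ⟨h1, h1'⟩ <;>
    rcases abs_cases (b - c) with ⟨h2, h2'⟩ | ⟨h2, h2'⟩ <;>
    rcases abs_cases (a - c) with ⟨h3, h3'⟩ | ⟨h3, h3'⟩ <;>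
    omega

/-- `v ∈ [id, u]` iff `min(i, u(i)) ≤ v(i) ≤ max(i, u(i))` for all
`i = 1, …, n`. -/
theorem mem_segment_iff (n : ℕ) (hn : 1 ≤ n) (u v : Equiv.Perm ℕ)
    (hu : InSymm n u) (hv : InSymm n v) :
    permDist n 1 v + permDist n v u = permDist n 1 u ↔
      ∀ i, 1 ≤ i → i ≤ n → min i (u i) ≤ v i ∧ v i ≤ max i (u i) := by
  unfold permDist
  simp only [Equiv.Perm.coe_one, id_eq]
  rw [← Finset.sum_add_distrib, eq_comm]
  rw [Finset.sum_eq_sum_iff_of_le (fun (i : ℕ) _ => abs_sub_le (i : ℤ) (v i) (u i))]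
  constructor
  · intro h i h1 h2
    have := h i (Finset.mem_Icc.mpr ⟨h1, h2⟩)
    have h' := (key_abs (i : ℤ) (v i) (u i)).mp (by simpa using this.symm)
    constructor <;> [have := h'.1; have := h'.2] <;> omega
  · intro h i hi
    obtain ⟨h1, h2⟩ := Finset.mem_Icc.mp hi
    have h' := h i h1 h2
    have : min (i : ℤ) (u i) ≤ v i ∧ (v i : ℤ) ≤ max (i : ℤ) (u i) := by
      constructor <;> [have := h'.1; have := h'.2] <;> omega
    have := (key_abs (i : ℤ) (v i) (u i)).mpr this
    simpa using this.symm
end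

section
/- Let m ≥ 1. The map g defined by g(u) = ρ(α u⁻¹ β⁻¹) restricts to a bijection from the segment [id, w_{2m+1}] onto B_{2m+2}; in particular the cardinality of the segment [id, w_{2m+1}] in S_{2m+1} equals the cardinality of B_{2m+2}. -/
/-- A permutation in `S_n` maps `{1,…,n}` into itself. -/
lemma insymm_mem {n : ℕ} {π : Equiv.Perm ℕ} (h : InSymm n π)
    {i : ℕ} (hi : i ∈ Finset.Icc 1 n) : π i ∈ Finset.Icc 1 n := by
  by_contra hc
  have h2 : π (π i) = π i := h _ hc
  have h3 := π.injective h2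
  rw [h3] at hc
  exact hc hi

/-- `S_n` is closed under inverses. -/
lemma insymm_inv {n : ℕ} {π : Equiv.Perm ℕ} (h : InSymm n π) : InSymm n π⁻¹ := by
  intro i hi
  conv_lhs => rw [← h i hi]
  exact Equiv.symm_apply_apply π i

/-- `S_n` is closed under products. -/
lemma insymm_mul {n : ℕ} {f g : Equiv.Perm ℕ} (hf : InSymm n f) (hg : InSymm n g) :
    InSymm n (f * g) := by
  intro i hi
  rw [Equiv.Perm.mul_apply, hg i hi, hf i hi]

/-- Betweenness characterization of equality in the triangle inequality on `ℤ`. -/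
lemma abs_between (a b c : ℤ) :
    |a - b| + |b - c| = |a - c| ↔ (a ≤ b ∧ b ≤ c) ∨ (c ≤ b ∧ b ≤ a) := by
  rcases abs_cases (a-b) with ⟨h1,h1'⟩|⟨h1,h1'⟩ <;>
  rcases abs_cases (b-c) with ⟨h2,h2'⟩|⟨h2,h2'⟩ <;>
  rcases abs_cases (a-c) with ⟨h3,h3'⟩|⟨h3,h3'⟩ <;>
  rw [h1,h2,h3] <;> omega

/-- Pointwise form of membership in the segment `[id, w_{2m+1}]`. -/
def SegCond (m : ℕ) (v : Equiv.Perm ℕ) : Prop :=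
  ∀ j, 1 ≤ j → j ≤ 2*m+1 →
    (j ≤ m+1 → j ≤ v j ∧ v j ≤ j + m) ∧
    (m+2 ≤ j → j ≤ v j + m + 1 ∧ v j ≤ j)

/-- `g : u ↦ ρ(α u⁻¹ β⁻¹)` restricts to a bijection from the
segment `[id, w_{2m+1}]` onto `B_{2m+2}`; in particular the two sets have the
same cardinality. -/
theorem g_bijOn_segment_B (m : ℕ) (hm : 1 ≤ m) (w α β : Equiv.Perm ℕ)
    -- `w` is `w_{2m+1}` with one-line notation `(m+1, …, 2m+1, 1, …, m)`
    (hw0 : InSymm (2 * m + 1) w)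
    (hw1 : ∀ j, 1 ≤ j → j ≤ m + 1 → w j = j + m)
    (hw2 : ∀ j, m + 2 ≤ j → j ≤ 2 * m + 1 → w j = j - m - 1)
    -- `α` has one-line notation `(1, 3, …, 2m+1, 2, 4, …, 2m)`
    (hα0 : InSymm (2 * m + 1) α)
    (hα1 : ∀ j, 1 ≤ j → j ≤ m + 1 → α j = 2 * j - 1)
    (hα2 : ∀ j, m + 2 ≤ j → j ≤ 2 * m + 1 → α j = 2 * j - 2 * m - 2)
    -- `β` has one-line notation `(2, 4, …, 2m, 2m+1, 1, 3, …, 2m−1)`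
    (hβ0 : InSymm (2 * m + 1) β)
    (hβ1 : ∀ j, 1 ≤ j → j ≤ m → β j = 2 * j)
    (hβ2 : β (m + 1) = 2 * m + 1)
    (hβ3 : ∀ j, m + 2 ≤ j → j ≤ 2 * m + 1 → β j = 2 * j - 2 * m - 3)
    (G : Equiv.Perm ℕ → Equiv.Perm ℕ)
    -- `G u = ρ(α u⁻¹ β⁻¹)` for every `u ∈ S_{2m+1}`
    (hG : ∀ u : Equiv.Perm ℕ, InSymm (2 * m + 1) u →
      InSymm (2 * m + 2) (G u) ∧
      (∀ i, 1 ≤ i → i ≤ 2 * m → G u i = (α * u⁻¹ * β⁻¹) i) ∧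
      G u (2 * m + 1) = 2 * m + 2 ∧
      G u (2 * m + 2) = (α * u⁻¹ * β⁻¹) (2 * m + 1)) :
    Set.BijOn G
      {v : Equiv.Perm ℕ | InSymm (2 * m + 1) v ∧
        permDist (2 * m + 1) 1 v + permDist (2 * m + 1) v w = permDist (2 * m + 1) 1 w}
      {π : Equiv.Perm ℕ | InSymm (2 * m + 2) π ∧
        ∀ i, 1 ≤ i → i ≤ m + 1 → π (2 * i) ≤ 2 * i ∧ 2 * i ≤ π (2 * i - 1)} ∧
    Set.ncard
      {v : Equiv.Perm ℕ | InSymm (2 * m + 1) v ∧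
        permDist (2 * m + 1) 1 v + permDist (2 * m + 1) v w = permDist (2 * m + 1) 1 w} =
    Set.ncard
      {π : Equiv.Perm ℕ | InSymm (2 * m + 2) π ∧
        ∀ i, 1 ≤ i → i ≤ m + 1 → π (2 * i) ≤ 2 * i ∧ 2 * i ≤ π (2 * i - 1)} := by
  -- the segment condition is pointwise
  have hseg : ∀ v : Equiv.Perm ℕ,
      (permDist (2*m+1) 1 v + permDist (2*m+1) v w = permDist (2*m+1) 1 w) ↔ SegCond m v := by
    intro v
    unfold permDist
    simp only [Equiv.Perm.one_apply]
    rw [← Finset.sum_add_distrib, eq_comm,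
      Finset.sum_eq_sum_iff_of_le (fun (j : ℕ) _ => abs_sub_le (j:ℤ) (v j : ℤ) (w j : ℤ))]
    constructor
    · intro h j h1 h2
      have hj := (h j (Finset.mem_Icc.mpr ⟨h1, h2⟩)).symm
      rw [abs_between] at hj
      constructor
      · intro hle
        have hwj := hw1 j h1 hle
        rw [hwj] at hj
        omega
      · intro hge
        have hwj := hw2 j hge h2
        have hwj' : (w j : ℤ) = (j:ℤ) - m - 1 := by rw [hwj]; omega
        rw [hwj'] at hj
        omega
    · intro h j hj
      rw [Finset.mem_Icc] at hj
      have hc := h j hj.1 hj.2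
      symm
      rw [abs_between]
      rcases le_or_gt j (m+1) with hle | hgt
      · have hwj := hw1 j hj.1 hle
        have := hc.1 hle
        rw [hwj]
        omega
      · have := hc.2 (by omega)
        have hwj' : (w j : ℤ) = (j:ℤ) - m - 1 := by rw [hw2 j (by omega) hj.2]; omega
        rw [hwj']
        omega
  -- values of β⁻¹
  have hβi1 : ∀ k, 1 ≤ k → k ≤ m → β⁻¹ (2*k) = k := by
    intro k h1 h2
    rw [← hβ1 k h1 h2]
    exact Equiv.symm_apply_apply β k
  have hβi2 : β⁻¹ (2*m+1) = m+1 := by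
    rw [← hβ2]; exact Equiv.symm_apply_apply β (m+1)
  have hβi3 : ∀ k, 1 ≤ k → k ≤ m → β⁻¹ (2*k-1) = m+1+k := by
    intro k h1 h2
    have h3 : β (m+1+k) = 2*k-1 := by
      have := hβ3 (m+1+k) (by omega) (by omega); omega
    rw [← h3]; exact Equiv.symm_apply_apply β _
  have hbij : Set.BijOn G
      {v : Equiv.Perm ℕ | InSymm (2 * m + 1) v ∧
        permDist (2 * m + 1) 1 v + permDist (2 * m + 1) v w = permDist (2 * m + 1) 1 w}
      {π : Equiv.Perm ℕ | InSymm (2 * m + 2) π ∧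
        ∀ i, 1 ≤ i → i ≤ m + 1 → π (2 * i) ≤ 2 * i ∧ 2 * i ≤ π (2 * i - 1)} := by
    refine ⟨?_, ?_, ?_⟩
    · -- MapsTo
      rintro v ⟨hvin, hvdist⟩
      have hvseg : SegCond m v := (hseg v).mp hvdist
      obtain ⟨hG0, hG1, hG2, hG3⟩ := hG v hvin
      have hvi : InSymm (2*m+1) v⁻¹ := insymm_inv hvin
      refine ⟨hG0, fun i hi1 hi2 => ?_⟩
      rcases Nat.lt_or_ge i (m+1) with hilt | hige
      · have him : i ≤ m := by omega
        constructor
        · -- G v (2*i) ≤ 2*i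
          have h2i : G v (2*i) = (α * v⁻¹ * β⁻¹) (2*i) := hG1 (2*i) (by omega) (by omega)
          have hstep : (α * v⁻¹ * β⁻¹) (2*i) = α (v⁻¹ i) := by
            simp only [Equiv.Perm.mul_apply]
            rw [hβi1 i hi1 him]
          rw [h2i, hstep]
          set j := v⁻¹ i with hj
          have hvj : v j = i := Equiv.apply_symm_apply v i
          have hjmem := insymm_mem hvi (Finset.mem_Icc.mpr (⟨hi1, by omega⟩ : 1 ≤ i ∧ i ≤ 2*m+1))
          rw [Finset.mem_Icc] at hjmem
          obtain ⟨hjc1, hjc2⟩ := hvseg j hjmem.1 hjmem.2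
          rcases le_or_gt j (m+1) with hjle | hjgt
          · have hαval := hα1 j hjmem.1 hjle
            have := hjc1 hjle
            omega
          · have hαval := hα2 j (by omega) hjmem.2
            have := hjc2 (by omega)
            omega
        · -- 2*i ≤ G v (2*i-1)
          have h2i : G v (2*i-1) = (α * v⁻¹ * β⁻¹) (2*i-1) := hG1 (2*i-1) (by omega) (by omega)
          have hstep : (α * v⁻¹ * β⁻¹) (2*i-1) = α (v⁻¹ (m+1+i)) := by
            simp only [Equiv.Perm.mul_apply]
            rw [hβi3 i hi1 him]
          rw [h2i, hstep]
          set j := v⁻¹ (m+1+i) with hj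
          have hvj : v j = m+1+i := Equiv.apply_symm_apply v (m+1+i)
          have hjmem := insymm_mem hvi
            (Finset.mem_Icc.mpr (⟨by omega, by omega⟩ : 1 ≤ m+1+i ∧ m+1+i ≤ 2*m+1))
          rw [Finset.mem_Icc] at hjmem
          obtain ⟨hjc1, hjc2⟩ := hvseg j hjmem.1 hjmem.2
          rcases le_or_gt j (m+1) with hjle | hjgt
          · have hαval := hα1 j hjmem.1 hjle
            have := hjc1 hjle
            omega
          · have hαval := hα2 j (by omega) hjmem.2
            have := hjc2 (by omega)
            omega
      · have hieq : i = m+1 := by omega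
        subst hieq
        constructor
        · have h1 : 2*(m+1) = 2*m+2 := by ring
          rw [h1, hG3]
          have hmem := insymm_mem (insymm_mul (insymm_mul hα0 hvi) (insymm_inv hβ0))
            (Finset.mem_Icc.mpr (⟨by omega, le_refl _⟩ : 1 ≤ 2*m+1 ∧ 2*m+1 ≤ 2*m+1))
          rw [Finset.mem_Icc] at hmem
          omega
        · have h1 : 2*(m+1)-1 = 2*m+1 := by omega
          rw [h1, hG2]
          omega
    · -- InjOn
      rintro v1 ⟨hv1in, _⟩ v2 ⟨hv2in, _⟩ heq
      obtain ⟨_, hG1a, hG2a, hG3a⟩ := hG v1 hv1in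
      obtain ⟨_, hG1b, hG2b, hG3b⟩ := hG v2 hv2in
      have key : α * v1⁻¹ * β⁻¹ = α * v2⁻¹ * β⁻¹ := by
        apply Equiv.ext
        intro i
        by_cases hmem : i ∈ Finset.Icc 1 (2*m+1)
        · rw [Finset.mem_Icc] at hmem
          rcases Nat.lt_or_ge i (2*m+1) with hlt | hge
          · rw [← hG1a i hmem.1 (by omega), ← hG1b i hmem.1 (by omega), heq]
          · have hieq : i = 2*m+1 := by omega
            subst hieq
            rw [← hG3a, ← hG3b, heq]
        · rw [insymm_mul (insymm_mul hα0 (insymm_inv hv1in)) (insymm_inv hβ0) i hmem,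
              insymm_mul (insymm_mul hα0 (insymm_inv hv2in)) (insymm_inv hβ0) i hmem]
      exact inv_injective (mul_left_cancel (mul_right_cancel key))
    · -- SurjOn
      rintro π ⟨hπin, hπB⟩
      have hπ21 : π (2*m+1) = 2*m+2 := by
        have h1 := (hπB (m+1) (by omega) le_rfl).2
        have h2 := insymm_mem hπin
          (Finset.mem_Icc.mpr (⟨by omega, by omega⟩ : 1 ≤ 2*(m+1)-1 ∧ 2*(m+1)-1 ≤ 2*m+2))
        rw [Finset.mem_Icc] at h2
        have h3 : 2*(m+1)-1 = 2*m+1 := by omega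
        rw [h3] at h1 h2
        omega
      set τ := Equiv.swap (2*m+1) (2*m+2) with hτdef
      set σ := π * τ with hσdef
      have hσ_apply : ∀ i, σ i = π (τ i) := fun i => rfl
      have hτ_small : ∀ i, i ≤ 2*m → τ i = i := by
        intro i hi
        rw [hτdef]
        exact Equiv.swap_apply_of_ne_of_ne (by omega) (by omega)
      have hσin : InSymm (2*m+1) σ := by
        intro i hi
        rw [Finset.mem_Icc] at hi
        by_cases h0 : i = 2*m+2
        · subst h0
          have hτ2 : τ (2*m+2) = 2*m+1 := Equiv.swap_apply_right _ _
          rw [hσ_apply, hτ2, hπ21]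
        · have hout : i ∉ Finset.Icc 1 (2*m+2) := by rw [Finset.mem_Icc]; omega
          have hτi : τ i = i := by
            rw [hτdef]
            exact Equiv.swap_apply_of_ne_of_ne (by omega) (by omega)
          rw [hσ_apply, hτi, hπin i hout]
      set v := β⁻¹ * σ⁻¹ * α with hvdef
      have hvin : InSymm (2*m+1) v :=
        insymm_mul (insymm_mul (insymm_inv hβ0) (insymm_inv hσin)) hα0
      have hcomp : α * v⁻¹ * β⁻¹ = σ := by
        rw [hvdef]
        group
      have hvseg : SegCond m v := by
        intro j h1 h2
        have hvj : v j = β⁻¹ (σ⁻¹ (α j)) := rfl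
        set b := σ⁻¹ (α j) with hb
        have hσb : σ b = α j := Equiv.apply_symm_apply σ (α j)
        have hαm := insymm_mem hα0 (Finset.mem_Icc.mpr ⟨h1, h2⟩)
        have hbmem := insymm_mem (insymm_inv hσin) hαm
        rw [Finset.mem_Icc] at hbmem hαm
        have hbcases : (∃ k, 1 ≤ k ∧ k ≤ m ∧ b = 2*k) ∨
            (∃ k, 1 ≤ k ∧ k ≤ m ∧ b = 2*k-1) ∨ b = 2*m+1 := by
          rcases Nat.even_or_odd b with ⟨k, hk⟩ | ⟨k, hk⟩
          · exact Or.inl ⟨k, by omega, by omega, by omega⟩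
          · by_cases hbm : b = 2*m+1
            · exact Or.inr (Or.inr hbm)
            · exact Or.inr (Or.inl ⟨k+1, by omega, by omega, by omega⟩)
        rcases hbcases with ⟨k, hk1, hk2, hbk⟩ | ⟨k, hk1, hk2, hbk⟩ | hbk
        · have hvjk : v j = k := by rw [hvj, hbk, hβi1 k hk1 hk2]
          have hπb : π b = α j := by rw [← hσb, hσ_apply, hτ_small b (by omega)]
          have hBc := (hπB k hk1 (by omega)).1
          rw [← hbk, hπb] at hBc
          constructor
          · intro hjle
            have hαval := hα1 j h1 hjle
            omega
          · intro hjge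
            have hαval := hα2 j hjge h2
            omega
        · have hvjk : v j = m+1+k := by rw [hvj, hbk, hβi3 k hk1 hk2]
          have hπb : π b = α j := by rw [← hσb, hσ_apply, hτ_small b (by omega)]
          have hBc := (hπB k hk1 (by omega)).2
          rw [← hbk, hπb] at hBc
          constructor
          · intro hjle
            have hαval := hα1 j h1 hjle
            omega
          · intro hjge
            have hαval := hα2 j hjge h2
            omega
        · have hvjk : v j = m+1 := by rw [hvj, hbk, hβi2]
          constructor
          · intro hjle; omega
          · intro hjge; omega
      obtain ⟨hG0, hG1, hG2, hG3⟩ := hG v hvin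
      have hGveq : G v = π := by
        apply Equiv.ext
        intro i
        by_cases hi1 : i ∈ Finset.Icc 1 (2*m+2)
        · rw [Finset.mem_Icc] at hi1
          rcases Nat.lt_or_ge i (2*m+1) with h | h
          · rw [hG1 i hi1.1 (by omega), hcomp, hσ_apply, hτ_small i (by omega)]
          · rcases Nat.lt_or_ge i (2*m+2) with h' | h'
            · have hieq : i = 2*m+1 := by omega
              subst hieq
              rw [hG2, hπ21]
            · have hieq : i = 2*m+2 := by omega
              subst hieq
              rw [hG3, hcomp, hσ_apply]
              have hτ1 : τ (2*m+1) = 2*m+2 := Equiv.swap_apply_left _ _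
              rw [hτ1]
        · rw [hG0 i hi1, hπin i hi1]
      exact ⟨v, ⟨hvin, (hseg v).mpr hvseg⟩, hGveq⟩
  exact ⟨hbij, by rw [← hbij.image_eq]; exact (Set.ncard_image_of_injOn hbij.injOn).symm⟩
end

section
/- Let m ≥ 1. For every permutation u ∈ S_{2m}, u belongs to the segment [id, w_{2m}] if and only if h(u) belongs to C_{2m+2}, where h(u) = η(α u⁻¹ β⁻¹). -/
lemma insymm_maps {n : ℕ} {π : Equiv.Perm ℕ} (h : InSymm n π) :
    ∀ i ∈ Finset.Icc 1 n, π i ∈ Finset.Icc 1 n := by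
  intro i hi
  by_contra hc
  have h2 := h (π i) hc
  have h3 := π.injective h2
  rw [h3] at hc
  exact hc hi

/-- `u ∈ [id, w_{2m}]` iff `h(u) = η(α u⁻¹ β⁻¹) ∈ C_{2m+2}`. -/
theorem mem_segment_iff_h_mem_C (m : ℕ) (hm : 1 ≤ m) (w α β : Equiv.Perm ℕ)
    -- `w` is `w_{2m}` with one-line notation `(m+1, …, 2m, 1, …, m)`
    (hw0 : InSymm (2 * m) w)
    (hw1 : ∀ j, 1 ≤ j → j ≤ m → w j = j + m)
    (hw2 : ∀ j, m + 1 ≤ j → j ≤ 2 * m → w j = j - m)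
    -- `α` has one-line notation `(1, 3, …, 2m−1, 2, 4, …, 2m)`
    (hα0 : InSymm (2 * m) α)
    (hα1 : ∀ j, 1 ≤ j → j ≤ m → α j = 2 * j - 1)
    (hα2 : ∀ j, m + 1 ≤ j → j ≤ 2 * m → α j = 2 * j - 2 * m)
    -- `β` has one-line notation `(3, 5, …, 2m−1, 1, 2m, 2, 4, …, 2m−2)`
    (hβ0 : InSymm (2 * m) β)
    (hβ1 : ∀ j, 1 ≤ j → j ≤ m - 1 → β j = 2 * j + 1)
    (hβ2 : β m = 1)
    (hβ3 : β (m + 1) = 2 * m)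
    (hβ4 : ∀ j, m + 2 ≤ j → j ≤ 2 * m → β j = 2 * j - 2 * m - 2)
    (u : Equiv.Perm ℕ) (hu : InSymm (2 * m) u) (hp : Equiv.Perm ℕ)
    -- `hp = h(u) = η(α u⁻¹ β⁻¹)`
    (hh0 : InSymm (2 * m + 2) hp)
    (hh1 : hp 1 = (α * u⁻¹ * β⁻¹) 1 + 1)
    (hh2 : hp 2 = 1)
    (hh3 : ∀ i, 3 ≤ i → i ≤ 2 * m → hp i = (α * u⁻¹ * β⁻¹) (i - 1) + 1)
    (hh4 : hp (2 * m + 1) = 2 * m + 2)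
    (hh5 : hp (2 * m + 2) = (α * u⁻¹ * β⁻¹) (2 * m) + 1)
    :
    (permDist (2 * m) 1 u + permDist (2 * m) u w = permDist (2 * m) 1 w) ↔
      (∀ i, 1 ≤ i → i ≤ m + 1 → hp (2 * i) < 2 * i ∧ 2 * i ≤ hp (2 * i - 1)) := by
  have huS : ∀ t ∈ Finset.Icc 1 (2 * m), u t ∈ Finset.Icc 1 (2 * m) := insymm_maps hu
  have huinv : InSymm (2 * m) u⁻¹ := insymm_inv hu
  have huinvS : ∀ t ∈ Finset.Icc 1 (2 * m), u⁻¹ t ∈ Finset.Icc 1 (2 * m) :=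
    insymm_maps huinv
  have hαS : ∀ t ∈ Finset.Icc 1 (2 * m), α t ∈ Finset.Icc 1 (2 * m) := insymm_maps hα0
  -- the permutation g = α u⁻¹ β⁻¹ applied pointwise
  have hgap : ∀ x, (α * u⁻¹ * β⁻¹) x = α (u⁻¹ (β⁻¹ x)) := fun x => rfl
  -- inverse values of β
  have hβinv1 : ∀ k, 1 ≤ k → k ≤ m - 1 → β⁻¹ (2 * k + 1) = k := by
    intro k hk1 hk2
    rw [← hβ1 k hk1 hk2, Equiv.Perm.inv_def, Equiv.symm_apply_apply]
  have hβinv2 : β⁻¹ 1 = m := by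
    rw [← hβ2, Equiv.Perm.inv_def, Equiv.symm_apply_apply]
  have hβinv3 : β⁻¹ (2 * m) = m + 1 := by
    rw [← hβ3, Equiv.Perm.inv_def, Equiv.symm_apply_apply]
  have hβinv4 : ∀ k, m + 2 ≤ k → k ≤ 2 * m → β⁻¹ (2 * k - 2 * m - 2) = k := by
    intro k hk1 hk2
    rw [← hβ4 k hk1 hk2, Equiv.Perm.inv_def, Equiv.symm_apply_apply]
  -- the condition C
  set C : ℕ → ℕ → Prop := fun k t =>
    (1 ≤ k → k ≤ m - 1 → α t ≤ 2 * k) ∧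
    (m + 2 ≤ k → k ≤ 2 * m → 2 * k - 2 * m - 1 ≤ α t) with hC
  -- Step 1: the distance equality is equivalent to termwise equality
  have key1 : (permDist (2 * m) 1 u + permDist (2 * m) u w = permDist (2 * m) 1 w) ↔
      ∀ t ∈ Finset.Icc 1 (2 * m),
        |(t : ℤ) - (w t : ℤ)| = |(t : ℤ) - (u t : ℤ)| + |(u t : ℤ) - (w t : ℤ)| := by
    have hsum : permDist (2 * m) 1 u + permDist (2 * m) u w
        = ∑ t ∈ Finset.Icc 1 (2 * m), (|(t : ℤ) - (u t : ℤ)| + |(u t : ℤ) - (w t : ℤ)|) := by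
      rw [permDist, permDist, ← Finset.sum_add_distrib]
      exact Finset.sum_congr rfl fun t _ => by simp
    have hperm : permDist (2 * m) 1 w = ∑ t ∈ Finset.Icc 1 (2 * m), |(t : ℤ) - (w t : ℤ)| := by
      rw [permDist]
      exact Finset.sum_congr rfl fun t _ => by simp
    rw [hsum, hperm, eq_comm]
    exact Finset.sum_eq_sum_iff_of_le fun t _ => abs_sub_le _ _ _
  -- Step 2: RHS is equivalent to ∀ k ∈ Icc, C k (u⁻¹ k)
  have key2 : (∀ i, 1 ≤ i → i ≤ m + 1 → hp (2 * i) < 2 * i ∧ 2 * i ≤ hp (2 * i - 1)) ↔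
      ∀ k ∈ Finset.Icc 1 (2 * m), C k (u⁻¹ k) := by
    constructor
    · intro hR k hk
      rw [Finset.mem_Icc] at hk
      constructor
      · intro hk1 hk2
        have hi := hR (k + 1) (by omega) (by omega)
        have e1 : hp (2 * (k + 1)) = (α * u⁻¹ * β⁻¹) (2 * (k + 1) - 1) + 1 :=
          hh3 (2 * (k + 1)) (by omega) (by omega)
        have e2 : 2 * (k + 1) - 1 = 2 * k + 1 := by omega
        rw [e1, e2, hgap, hβinv1 k hk1 hk2] at hi
        omega
      · intro hk1 hk2
        have hi := hR (k - m) (by omega) (by omega)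
        have e1 : hp (2 * (k - m) - 1) = (α * u⁻¹ * β⁻¹) (2 * (k - m) - 1 - 1) + 1 :=
          hh3 (2 * (k - m) - 1) (by omega) (by omega)
        have e2 : 2 * (k - m) - 1 - 1 = 2 * k - 2 * m - 2 := by omega
        rw [e1, e2, hgap, hβinv4 k hk1 hk2] at hi
        omega
    · intro hC' i hi1 hi2
      rcases eq_or_lt_of_le hi1 with h1 | h1
      · -- i = 1
        have hi' : i = 1 := h1.symm
        subst hi'
        have hg1 : (α * u⁻¹ * β⁻¹) 1 = α (u⁻¹ m) := by rw [hgap, hβinv2]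
        have hmem : α (u⁻¹ m) ∈ Finset.Icc 1 (2 * m) :=
          hαS _ (huinvS m (Finset.mem_Icc.mpr ⟨hm, by omega⟩))
      
        rw [Finset.mem_Icc] at hmem
        constructor
        · rw [show 2 * 1 = 2 by norm_num, hh2]; omega
        · rw [show 2 * 1 - 1 = 1 by norm_num, hh1, hg1]; omega
      rcases eq_or_lt_of_le hi2 with h2 | h2
      · -- i = m + 1
        subst h2
        have hg1 : (α * u⁻¹ * β⁻¹) (2 * m) = α (u⁻¹ (m + 1)) := by rw [hgap, hβinv3]
        have hmem : α (u⁻¹ (m + 1)) ∈ Finset.Icc 1 (2 * m) :=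
          hαS _ (huinvS (m + 1) (Finset.mem_Icc.mpr ⟨by omega, by omega⟩))
        rw [Finset.mem_Icc] at hmem
        constructor
        · rw [show 2 * (m + 1) = 2 * m + 2 by ring, hh5, hg1]; omega
        · rw [show 2 * (m + 1) - 1 = 2 * m + 1 by omega, hh4]; omega
      · -- 2 ≤ i ≤ m
        have hi2' : 2 ≤ i := h1
        have hi3 : i ≤ m := by omega
        have hC1 := (hC' (i - 1) (Finset.mem_Icc.mpr ⟨by omega, by omega⟩)).1
          (by omega) (by omega)
        have hC2 := (hC' (m + i) (Finset.mem_Icc.mpr ⟨by omega, by omega⟩)).2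
          (by omega) (by omega)
        constructor
        · have e1 : hp (2 * i) = (α * u⁻¹ * β⁻¹) (2 * i - 1) + 1 :=
            hh3 (2 * i) (by omega) (by omega)
          have e2 : 2 * i - 1 = 2 * (i - 1) + 1 := by omega
          rw [e1, e2, hgap, hβinv1 (i - 1) (by omega) (by omega)]
          omega
        · have e1 : hp (2 * i - 1) = (α * u⁻¹ * β⁻¹) (2 * i - 1 - 1) + 1 :=
            hh3 (2 * i - 1) (by omega) (by omega)
          have e2 : 2 * i - 1 - 1 = 2 * (m + i) - 2 * m - 2 := by omega
          rw [e1, e2, hgap, hβinv4 (m + i) (by omega) (by omega)]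
          omega
  -- Step 3: reindex by the bijection u
  have key3 : (∀ k ∈ Finset.Icc 1 (2 * m), C k (u⁻¹ k)) ↔
      ∀ t ∈ Finset.Icc 1 (2 * m), C (u t) t := by
    constructor
    · intro h t ht
      have := h (u t) (huS t ht)
      rwa [Equiv.Perm.inv_def, Equiv.symm_apply_apply] at this
    · intro h k hk
      have := h (u⁻¹ k) (huinvS k hk)
      rwa [Equiv.Perm.inv_def, Equiv.apply_symm_apply] at this
  -- Step 4: pointwise equivalence
  have key4 : ∀ t ∈ Finset.Icc 1 (2 * m),
      (|(t : ℤ) - (w t : ℤ)| = |(t : ℤ) - (u t : ℤ)| + |(u t : ℤ) - (w t : ℤ)|) ↔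
      C (u t) t := by
    intro t ht
    have htm := Finset.mem_Icc.mp ht
    have hut := Finset.mem_Icc.mp (huS t ht)
    rcases le_or_gt t m with hcase | hcase
    · -- t ≤ m : w t = t + m, α t = 2t - 1
      simp only [hC]
      rw [hw1 t htm.1 hcase, hα1 t htm.1 hcase]
      simp only [Int.abs_eq_natAbs]
      omega
    · -- t ≥ m + 1 : w t = t - m, α t = 2t - 2m
      simp only [hC]
      rw [hw2 t (by omega) htm.2, hα2 t (by omega) htm.2]
      simp only [Int.abs_eq_natAbs]
      omega
  rw [key1, key2, key3]
  exact forall₂_congr key4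
end

section
/- Let m ≥ 1. The map η: S_{2m} → S_{2m+2} sending u to the permutation with one-line notation (u(1)+1, 1, u(2)+1, u(3)+1, …, u(2m−1)+1, 2m+2, u(2m)+1) is injective, and its image consists exactly of the permutations σ ∈ S_{2m+2} with σ(2) = 1 and σ(2m+1) = 2m+2. -/
lemma insymm_apply {n : ℕ} {σ : Equiv.Perm ℕ} (h : InSymm n σ) {i : ℕ}
    (hi : ¬ (1 ≤ i ∧ i ≤ n)) : σ i = i :=
  h i (by simp only [Finset.mem_Icc]; omega)

lemma insymm_le {n : ℕ} {σ : Equiv.Perm ℕ} (h : InSymm n σ) {i : ℕ} (hi : i ≤ n) :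
    σ i ≤ n := by
  by_contra hgt
  push_neg at hgt
  have h1 : σ (σ i) = σ i := insymm_apply h (by omega)
  have := σ.injective h1
  omega

lemma insymm_pos {n : ℕ} {σ : Equiv.Perm ℕ} (h : InSymm n σ) {i : ℕ} (hi : 1 ≤ i)
    (hi2 : i ≤ n) : 1 ≤ σ i := by
  have h0 : σ 0 = 0 := insymm_apply h (by omega)
  by_contra hz
  push_neg at hz
  have h2 : σ i = σ 0 := by omega
  have := σ.injective h2
  omega

/-- The cycle `(1 2 … 2m+1)`: shifts `[1,2m]` up by one. -/
def sPerm (m : ℕ) : Equiv.Perm ℕ where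
  toFun x := if 1 ≤ x ∧ x ≤ 2*m then x+1 else if x = 2*m+1 then 1 else x
  invFun y := if 2 ≤ y ∧ y ≤ 2*m+1 then y-1 else if y = 1 then 2*m+1 else y
  left_inv x := by dsimp only; split_ifs <;> omega
  right_inv y := by dsimp only; split_ifs <;> omega

lemma sPerm_symm_apply (m y : ℕ) :
    (sPerm m).symm y = if 2 ≤ y ∧ y ≤ 2*m+1 then y-1 else if y = 1 then 2*m+1 else y := rfl

set_option maxHeartbeats 1000000 in
/-- The position permutation. -/
def pPerm (m : ℕ) (hm : 1 ≤ m) : Equiv.Perm ℕ where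
  toFun x := if x = 1 then 1 else if 2 ≤ x ∧ x ≤ 2*m-1 then x+1
    else if x = 2*m then 2*m+2 else if x = 2*m+1 then 2
    else if x = 2*m+2 then 2*m+1 else x
  invFun y := if y = 1 then 1 else if 3 ≤ y ∧ y ≤ 2*m then y-1
    else if y = 2*m+2 then 2*m else if y = 2 then 2*m+1
    else if y = 2*m+1 then 2*m+2 else y
  left_inv x := by dsimp only; split_ifs <;> omega
  right_inv y := by dsimp only; split_ifs <;> omega

lemma pPerm_apply (m : ℕ) (hm : 1 ≤ m) (x : ℕ) :
    pPerm m hm x = if x = 1 then 1 else if 2 ≤ x ∧ x ≤ 2*m-1 then x+1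
    else if x = 2*m then 2*m+2 else if x = 2*m+1 then 2
    else if x = 2*m+2 then 2*m+1 else x := rfl

/-- the map `η : S_{2m} → S_{2m+2}` is injective, with image
exactly the `σ ∈ S_{2m+2}` with `σ(2) = 1` and `σ(2m+1) = 2m+2`. -/
theorem eta_injective_image (m : ℕ) (hm : 1 ≤ m) (E : Equiv.Perm ℕ → Equiv.Perm ℕ)
    -- `E u = η(u)` for every `u ∈ S_{2m}`
    (hE : ∀ u : Equiv.Perm ℕ, InSymm (2 * m) u →
      InSymm (2 * m + 2) (E u) ∧
      E u 1 = u 1 + 1 ∧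
      E u 2 = 1 ∧
      (∀ i, 3 ≤ i → i ≤ 2 * m → E u i = u (i - 1) + 1) ∧
      E u (2 * m + 1) = 2 * m + 2 ∧
      E u (2 * m + 2) = u (2 * m) + 1) :
    Set.InjOn E {u : Equiv.Perm ℕ | InSymm (2 * m) u} ∧
      E '' {u : Equiv.Perm ℕ | InSymm (2 * m) u} =
        {σ : Equiv.Perm ℕ | InSymm (2 * m + 2) σ ∧ σ 2 = 1 ∧ σ (2 * m + 1) = 2 * m + 2} := by
  constructor
  · intro u hu v hv heq
    obtain ⟨-, hu1, -, hu3, -, hu6⟩ := hE u hu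
    obtain ⟨-, hv1, -, hv3, -, hv6⟩ := hE v hv
    ext i
    by_cases hi : 1 ≤ i ∧ i ≤ 2*m
    · rcases eq_or_ne i (2*m) with rfl | hne
      · have h : E u (2*m+2) = E v (2*m+2) := by rw [heq]
        omega
      rcases eq_or_ne i 1 with rfl | hne1
      · have h : E u 1 = E v 1 := by rw [heq]
        omega
      · have hu' := hu3 (i+1) (by omega) (by omega)
        have hv' := hv3 (i+1) (by omega) (by omega)
        have h : E u (i+1) = E v (i+1) := by rw [heq]
        simp only [Nat.add_sub_cancel] at hu' hv'
        omega
    · rw [insymm_apply hu hi, insymm_apply hv hi]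
  · ext σ
    simp only [Set.mem_image, Set.mem_setOf_eq]
    constructor
    · rintro ⟨u, hu, rfl⟩
      obtain ⟨h1, -, h2, -, h3, -⟩ := hE u hu
      exact ⟨h1, h2, h3⟩
    · rintro ⟨hσ, hσ2, hσ21⟩
      set u : Equiv.Perm ℕ := ((pPerm m hm).trans σ).trans (sPerm m).symm with hudef
      have hval : ∀ x, u x = (sPerm m).symm (σ (pPerm m hm x)) := fun x => rfl
      have hrange : ∀ i, 1 ≤ i → i ≤ 2*m+2 → i ≠ 2 → i ≠ 2*m+1 →
          2 ≤ σ i ∧ σ i ≤ 2*m+1 := by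
        intro i h1 h2 h3 h4
        have hle := insymm_le hσ h2
        have hpos := insymm_pos hσ h1 h2
        have hne1 : σ i ≠ 1 := fun h => h3 (σ.injective (h.trans hσ2.symm))
        have hne2 : σ i ≠ 2*m+2 := fun h => h4 (σ.injective (h.trans hσ21.symm))
        omega
      have hu : InSymm (2*m) u := by
        intro i hi
        have hi' : i < 1 ∨ 2*m < i := by
          simp only [Finset.mem_Icc] at hi; omega
        rw [hval]
        rcases eq_or_ne i (2*m+1) with rfl | h1
        · have hp : pPerm m hm (2*m+1) = 2 := by rw [pPerm_apply]; split_ifs <;> omega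
          rw [hp, hσ2, sPerm_symm_apply]; split_ifs <;> omega
        rcases eq_or_ne i (2*m+2) with rfl | h2
        · have hp : pPerm m hm (2*m+2) = 2*m+1 := by rw [pPerm_apply]; split_ifs <;> omega
          rw [hp, hσ21, sPerm_symm_apply]; split_ifs <;> omega
        · have hp : pPerm m hm i = i := by rw [pPerm_apply]; split_ifs <;> omega
          have hs : σ i = i := insymm_apply hσ (by omega)
          rw [hp, hs, sPerm_symm_apply]; split_ifs <;> omega
      refine ⟨u, hu, ?_⟩
      obtain ⟨hE1, hE2, hE3, hE4, hE5, hE6⟩ := hE u hu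
      ext i
      by_cases hmem : 1 ≤ i ∧ i ≤ 2*m+2
      · rcases eq_or_ne i 1 with rfl | h1
        · have hp : pPerm m hm 1 = 1 := by rw [pPerm_apply]; split_ifs <;> omega
          have hr := hrange 1 (by omega) (by omega) (by omega) (by omega)
          have hu1 : u 1 = σ 1 - 1 := by
            rw [hval, hp, sPerm_symm_apply]; split_ifs <;> omega
          rw [hE2, hu1]; omega
        rcases eq_or_ne i 2 with rfl | h2
        · rw [hE3, hσ2]
        rcases eq_or_ne i (2*m+1) with rfl | h3
        · rw [hE5, hσ21]
        rcases eq_or_ne i (2*m+2) with rfl | h4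
        · have hp : pPerm m hm (2*m) = 2*m+2 := by rw [pPerm_apply]; split_ifs <;> omega
          have hr := hrange (2*m+2) (by omega) (by omega) (by omega) (by omega)
          have hui : u (2*m) = σ (2*m+2) - 1 := by
            rw [hval, hp, sPerm_symm_apply]; split_ifs <;> omega
          rw [hE6, hui]; omega
        · have h3le : 3 ≤ i := by omega
          have hle2m : i ≤ 2*m := by omega
          have hp : pPerm m hm (i-1) = i := by rw [pPerm_apply]; split_ifs <;> omega
          have hr := hrange i (by omega) (by omega) h2 h3
          have hui : u (i-1) = σ i - 1 := by
            rw [hval, hp, sPerm_symm_apply]; split_ifs <;> omega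
          rw [hE4 i h3le hle2m, hui]; omega
      · rw [insymm_apply hE1 hmem, insymm_apply hσ hmem]
end

section
/- Let m ≥ 1 and 1 ≤ i ≤ m. For every permutation u ∈ S_{2m+1}, one has g(u)(2i) = α(u⁻¹(i)), and the inequality g(u)(2i) ≤ 2i holds if and only if u⁻¹(i) ∈ [1, i] ∪ [m+2, m+i+1]. -/
/-- `g(u)(2i) = α(u⁻¹(i))`, and `g(u)(2i) ≤ 2i` iff
`u⁻¹(i) ∈ [1, i] ∪ [m+2, m+i+1]`. -/
theorem g_even_positions (m : ℕ) (hm : 1 ≤ m) (i : ℕ) (hi1 : 1 ≤ i) (hi2 : i ≤ m)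
    (α β : Equiv.Perm ℕ)
    -- `α` has one-line notation `(1, 3, …, 2m+1, 2, 4, …, 2m)`
    (hα0 : InSymm (2 * m + 1) α)
    (hα1 : ∀ j, 1 ≤ j → j ≤ m + 1 → α j = 2 * j - 1)
    (hα2 : ∀ j, m + 2 ≤ j → j ≤ 2 * m + 1 → α j = 2 * j - 2 * m - 2)
    -- `β` has one-line notation `(2, 4, …, 2m, 2m+1, 1, 3, …, 2m−1)`
    (hβ0 : InSymm (2 * m + 1) β)
    (hβ1 : ∀ j, 1 ≤ j → j ≤ m → β j = 2 * j)
    (hβ2 : β (m + 1) = 2 * m + 1)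
    (hβ3 : ∀ j, m + 2 ≤ j → j ≤ 2 * m + 1 → β j = 2 * j - 2 * m - 3)
    (u : Equiv.Perm ℕ) (hu : InSymm (2 * m + 1) u) (gu : Equiv.Perm ℕ)
    -- `gu = g(u) = ρ(α u⁻¹ β⁻¹)`
    (hg0 : InSymm (2 * m + 2) gu)
    (hg1 : ∀ i, 1 ≤ i → i ≤ 2 * m → gu i = (α * u⁻¹ * β⁻¹) i)
    (hg2 : gu (2 * m + 1) = 2 * m + 2)
    (hg3 : gu (2 * m + 2) = (α * u⁻¹ * β⁻¹) (2 * m + 1))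
    :
    gu (2 * i) = α (u⁻¹ i) ∧
      (gu (2 * i) ≤ 2 * i ↔
        u⁻¹ i ∈ Finset.Icc 1 i ∪ Finset.Icc (m + 2) (m + i + 1)) := by
  have hβinv : β⁻¹ (2 * i) = i := by
    rw [Equiv.Perm.inv_eq_iff_eq]
    exact (hβ1 i hi1 hi2).symm
  have hmain : gu (2 * i) = α (u⁻¹ i) := by
    rw [hg1 (2 * i) (by omega) (by omega)]
    simp [Equiv.Perm.mul_apply, hβinv]
  have hk : u⁻¹ i ∈ Finset.Icc 1 (2 * m + 1) := by
    by_contra h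
    have := hu _ h
    have h2 : u (u⁻¹ i) = i := Equiv.apply_symm_apply u i
    rw [this] at h2
    rw [h2] at h
    simp [Finset.mem_Icc] at h
    omega
  simp only [Finset.mem_Icc] at hk
  refine ⟨hmain, ?_⟩
  rw [hmain]
  simp only [Finset.mem_union, Finset.mem_Icc]
  rcases le_or_gt (u⁻¹ i) (m + 1) with h | h
  · rw [hα1 _ hk.1 h]; omega
  · rw [hα2 _ (by omega) hk.2]; omega
end

section
/- Let m ≥ 2 and 2 ≤ i ≤ m. For every permutation u ∈ S_{2m}, one has h(u)(2i) = α(u⁻¹(i−1)) + 1, and the strict inequality h(u)(2i) < 2i holds if and only if u⁻¹(i−1) ∈ [1, i−1] ∪ [m+1, m+i−1]. -/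
/-- for `2 ≤ i ≤ m`, `h(u)(2i) = α(u⁻¹(i−1)) + 1`, and
`h(u)(2i) < 2i` iff `u⁻¹(i−1) ∈ [1, i−1] ∪ [m+1, m+i−1]`. -/
theorem h_even_positions (m : ℕ) (hm : 2 ≤ m) (i : ℕ) (hi1 : 2 ≤ i) (hi2 : i ≤ m)
    (α β : Equiv.Perm ℕ)
    -- `α` has one-line notation `(1, 3, …, 2m−1, 2, 4, …, 2m)`
    (hα0 : InSymm (2 * m) α)
    (hα1 : ∀ j, 1 ≤ j → j ≤ m → α j = 2 * j - 1)
    (hα2 : ∀ j, m + 1 ≤ j → j ≤ 2 * m → α j = 2 * j - 2 * m)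
    -- `β` has one-line notation `(3, 5, …, 2m−1, 1, 2m, 2, 4, …, 2m−2)`
    (hβ0 : InSymm (2 * m) β)
    (hβ1 : ∀ j, 1 ≤ j → j ≤ m - 1 → β j = 2 * j + 1)
    (hβ2 : β m = 1)
    (hβ3 : β (m + 1) = 2 * m)
    (hβ4 : ∀ j, m + 2 ≤ j → j ≤ 2 * m → β j = 2 * j - 2 * m - 2)
    (u : Equiv.Perm ℕ) (hu : InSymm (2 * m) u) (hp : Equiv.Perm ℕ)
    -- `hp = h(u) = η(α u⁻¹ β⁻¹)`
    (hh0 : InSymm (2 * m + 2) hp)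
    (hh1 : hp 1 = (α * u⁻¹ * β⁻¹) 1 + 1)
    (hh2 : hp 2 = 1)
    (hh3 : ∀ i, 3 ≤ i → i ≤ 2 * m → hp i = (α * u⁻¹ * β⁻¹) (i - 1) + 1)
    (hh4 : hp (2 * m + 1) = 2 * m + 2)
    (hh5 : hp (2 * m + 2) = (α * u⁻¹ * β⁻¹) (2 * m) + 1)
    :
    hp (2 * i) = α (u⁻¹ (i - 1)) + 1 ∧
      (hp (2 * i) < 2 * i ↔
        u⁻¹ (i - 1) ∈ Finset.Icc 1 (i - 1) ∪ Finset.Icc (m + 1) (m + i - 1)) := by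
  have hβi : β (i - 1) = 2 * i - 1 := by
    have := hβ1 (i - 1) (by omega) (by omega)
    omega
  have hbinv : β⁻¹ (2 * i - 1) = i - 1 := by
    rw [← hβi]; simp
  have hstep : hp (2 * i) = α (u⁻¹ (i - 1)) + 1 := by
    have := hh3 (2 * i) (by omega) (by omega)
    rw [this]
    simp only [Equiv.Perm.mul_apply]
    rw [show 2 * i - 1 = 2 * i - 1 from rfl, hbinv]
  set k := u⁻¹ (i - 1) with hk
  have huk : u k = i - 1 := by simp [hk]
  have hkrange : 1 ≤ k ∧ k ≤ 2 * m := by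
    by_contra hc
    have hnot : k ∉ Finset.Icc 1 (2 * m) := by
      simp only [Finset.mem_Icc]; omega
    have := hu k hnot
    rw [this] at huk
    exact hc ⟨by omega, by omega⟩
  refine ⟨hstep, ?_⟩
  rw [hstep]
  simp only [Finset.mem_union, Finset.mem_Icc]
  rcases le_or_gt k m with hkm | hkm
  · have := hα1 k hkrange.1 hkm
    omega
  · have := hα2 k (by omega) hkrange.2
    omega
end

section
/- Let m ≥ 2 and 2 ≤ i ≤ m. For every permutation u ∈ S_{2m}, one has h(u)(2i−1) = α(u⁻¹(i+m)) + 1, and the inequality h(u)(2i−1) ≥ 2i holds if and only if u⁻¹(i+m) ∈ [i, m] ∪ [m+i, 2m]. -/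
/-- for `2 ≤ i ≤ m`, `h(u)(2i−1) = α(u⁻¹(i+m)) + 1`, and
`h(u)(2i−1) ≥ 2i` iff `u⁻¹(i+m) ∈ [i, m] ∪ [m+i, 2m]`. -/
theorem h_odd_positions (m : ℕ) (hm : 2 ≤ m) (i : ℕ) (hi1 : 2 ≤ i) (hi2 : i ≤ m)
    (α β : Equiv.Perm ℕ)
    -- `α` has one-line notation `(1, 3, …, 2m−1, 2, 4, …, 2m)`
    (hα0 : InSymm (2 * m) α)
    (hα1 : ∀ j, 1 ≤ j → j ≤ m → α j = 2 * j - 1)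
    (hα2 : ∀ j, m + 1 ≤ j → j ≤ 2 * m → α j = 2 * j - 2 * m)
    -- `β` has one-line notation `(3, 5, …, 2m−1, 1, 2m, 2, 4, …, 2m−2)`
    (hβ0 : InSymm (2 * m) β)
    (hβ1 : ∀ j, 1 ≤ j → j ≤ m - 1 → β j = 2 * j + 1)
    (hβ2 : β m = 1)
    (hβ3 : β (m + 1) = 2 * m)
    (hβ4 : ∀ j, m + 2 ≤ j → j ≤ 2 * m → β j = 2 * j - 2 * m - 2)
    (u : Equiv.Perm ℕ) (hu : InSymm (2 * m) u) (hp : Equiv.Perm ℕ)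
    -- `hp = h(u) = η(α u⁻¹ β⁻¹)`
    (hh0 : InSymm (2 * m + 2) hp)
    (hh1 : hp 1 = (α * u⁻¹ * β⁻¹) 1 + 1)
    (hh2 : hp 2 = 1)
    (hh3 : ∀ i, 3 ≤ i → i ≤ 2 * m → hp i = (α * u⁻¹ * β⁻¹) (i - 1) + 1)
    (hh4 : hp (2 * m + 1) = 2 * m + 2)
    (hh5 : hp (2 * m + 2) = (α * u⁻¹ * β⁻¹) (2 * m) + 1)
    :
    hp (2 * i - 1) = α (u⁻¹ (i + m)) + 1 ∧
      (2 * i ≤ hp (2 * i - 1) ↔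
        u⁻¹ (i + m) ∈ Finset.Icc i m ∪ Finset.Icc (m + i) (2 * m)) := by
  have hβinv : β⁻¹ (2 * i - 2) = i + m := by
    rw [Equiv.Perm.inv_eq_iff_eq]
    rw [show i + m = m + i from by omega, hβ4 (m + i) (by omega) (by omega)]
    omega
  have hfst : hp (2 * i - 1) = α (u⁻¹ (i + m)) + 1 := by
    rw [hh3 (2 * i - 1) (by omega) (by omega)]
    have : 2 * i - 1 - 1 = 2 * i - 2 := by omega
    rw [this]
    simp only [Equiv.Perm.mul_apply]
    rw [hβinv]
  refine ⟨hfst, ?_⟩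
  set k := u⁻¹ (i + m) with hk
  have hkmem : k ∈ Finset.Icc 1 (2 * m) := by
    by_contra hc
    have := hu k hc
    have h2 : u k = i + m := by rw [hk]; simp
    rw [this] at h2
    simp only [Finset.mem_Icc] at hc
    omega
  simp only [Finset.mem_Icc] at hkmem
  rw [hfst, Finset.mem_union, Finset.mem_Icc, Finset.mem_Icc]
  rcases le_or_gt k m with hkm | hkm
  · rw [hα1 k hkmem.1 hkm]; omega
  · rw [hα2 k (by omega) hkmem.2]; omega
end
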